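/- arXiv:hep-th/9309024 — 3 statements merged into one kernel-verified Lean document; each statement's English description precedes it below -/
import Mathlib

section
/- Fix a ∈ I and suppose the twisted weights satisfy the eigenvalue property ∑_d N^d_{bc} ω²_d(a) = ω²_b(a) ω²_c(a) for all b,c ∈ I, and suppose there exists b ∈ I with ω²_b ≠ ω²_b(a). Then ∑_{c∈I} ω²_c ω²_{c*}(a) = 0. -/
open Finset in
/-- Fix `a` and suppose the twisted weights `f = ω²_·(a)` satisfy the eigenvalue
property `∑_d N^d_{bc} f d = f b * f c` and `∃ b, ω²_b ≠ f b`.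
Then `∑_c ω²_c f(c*) = 0`.  (`N b c d` denotes `N^d_{bc}`.) -/
theorem twisted_weight_orthogonality
    {I : Type*} [Fintype I]
    (inv : I → I) (hinv : ∀ i, inv (inv i) = i)
    (N : I → I → I → ℕ)
    (hNsym : ∀ b c d, N b (inv c) d = N b (inv d) c)
    (hNcomm : ∀ b c d, N b c d = N c b d)
    (ωw : I → ℂ) (hωw : ∀ i, ωw i ≠ 0)
    (hωstar : ∀ c, (ωw (inv c)) ^ 2 = (ωw c) ^ 2)
    (hmul : ∀ b c, ∑ d, (ωw d) ^ 2 * (N b c d : ℂ) = (ωw b) ^ 2 * (ωw c) ^ 2)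
    (f : I → ℂ)
    (heig : ∀ b c, ∑ d, (N b c d : ℂ) * f d = f b * f c)
    (hne : ∃ b, (ωw b) ^ 2 ≠ f b) :
    ∑ c, (ωw c) ^ 2 * f (inv c) = 0 := by
  obtain ⟨b, hb⟩ := hne
  set S := ∑ c, (ωw c) ^ 2 * f (inv c) with hS
  let e : I ≃ I := ⟨inv, inv, hinv, hinv⟩
  have h1 : (ωw b) ^ 2 * S = ∑ c, ∑ d, (ωw d) ^ 2 * (N b c d : ℂ) * f (inv c) := by
    rw [hS, Finset.mul_sum]
    refine Finset.sum_congr rfl fun c _ => ?_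
    rw [← mul_assoc, ← hmul b c, Finset.sum_mul]
  have h2 : f b * S = ∑ c, ∑ d, (ωw c) ^ 2 * (N b (inv c) d : ℂ) * f d := by
    rw [hS, Finset.mul_sum]
    refine Finset.sum_congr rfl fun c _ => ?_
    have : f b * (ωw c ^ 2 * f (inv c)) = ωw c ^ 2 * (f b * f (inv c)) := by ring
    rw [this, ← heig b (inv c), Finset.mul_sum]
    refine Finset.sum_congr rfl fun d _ => ?_
    ring
  have h3 : ∑ c, ∑ d, (ωw d) ^ 2 * (N b c d : ℂ) * f (inv c)
      = ∑ c, ∑ d, (ωw c) ^ 2 * (N b (inv c) d : ℂ) * f d := by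
    rw [Finset.sum_comm]
    refine Finset.sum_congr rfl fun d _ => ?_
    refine Fintype.sum_equiv e _ _ fun c => ?_
    simp only [e, Equiv.coe_fn_mk, hinv]
    rw [hNsym b d (inv c), hinv]
  have key : ((ωw b) ^ 2 - f b) * S = 0 := by
    rw [sub_mul, h1, h2, h3, sub_self]
  rcases mul_eq_zero.mp key with h | h
  · exact absurd (sub_eq_zero.mp h) hb
  · exact h
end

section
/- Assume S is symmetric, S_{a*b} = S_{ab*}, S_{0d} ≠ 0 for all d, the unitarity relation ∑_b S_{ab} S_{bc*} = δ_{ac} holds, and for every a ∈ I the eigenvector relation ∑_e N^e_{cd} S_{ea} = S_{ca} S_{da} / S_{0a} holds. Then the Verlinde formula holds: N^c_{ab} = ∑_{d∈I} S_{ad} S_{bd} S_{c*d} / S_{0d} for all a, b, c ∈ I. -/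
open Finset in
/-- Verlinde formula: under unitarity, symmetry, `S_{0d} ≠ 0` and the eigenvector
relation `∑_e N^e_{cd} S_{ea} = S_{ca} S_{da} / S_{0a}`, one has
`N^c_{ab} = ∑_d S_{ad} S_{bd} S_{c*d} / S_{0d}`.  (`N a b c` denotes `N^c_{ab}`.) -/
theorem verlinde_formula
    {I : Type*} [Fintype I] [DecidableEq I]
    (inv : I → I) (z : I) (hinv : ∀ i, inv (inv i) = i) (hz : inv z = z)
    (N : I → I → I → ℂ)
    (S : I → I → ℂ)
    (hSsym : ∀ a b, S a b = S b a)
    (hSstar : ∀ a b, S (inv a) b = S a (inv b))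
    (hS0 : ∀ d, S z d ≠ 0)
    (hunit : ∀ a c, ∑ b, S a b * S b (inv c) = if a = c then 1 else 0)
    (heig : ∀ a c d, ∑ e, N c d e * S e a = S c a * S d a / S z a) :
    ∀ a b c, N a b c = ∑ d, S a d * S b d * S (inv c) d / S z d := by
  intro a b c
  have h1 : ∀ d, S a d * S b d * S (inv c) d / S z d
      = ∑ e, N a b e * S e d * S d (inv c) := by
    intro d
    calc S a d * S b d * S (inv c) d / S z d
        = (S a d * S b d / S z d) * S d (inv c) := by rw [hSsym (inv c) d]; ring
      _ = (∑ e, N a b e * S e d) * S d (inv c) := by rw [heig d a b]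
      _ = ∑ e, N a b e * S e d * S d (inv c) := by rw [Finset.sum_mul]
  simp_rw [h1]
  rw [Finset.sum_comm]
  simp_rw [mul_assoc, ← Finset.mul_sum, hunit]
  simp
end

section
/- Given the Verlinde formula N^c_{ab} = ∑_d S_{ad} S_{bd} S_{c*d} / S_{0d} together with unitarity ∑_b S_{ab}S_{bc*} = δ_{ac}, symmetry of S, and S_{0d} ≠ 0, the genus-g dimension formula holds: tr((∑_a N_{a*} N_a)^{g-1}) = ∑_{d∈I} (λ_d)^{g-1}, where λ_d = ∑_a S_{ad} S_{a*d} / S_{0d}², N_a being the matrix (N_a)_{b,c} = N^b_{ac}. -/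
open Finset in
/-- Genus-`g` dimension formula: with `N^c_{ab} := ∑_d S_{ad}S_{bd}S_{c*d}/S_{0d}`
and `(N_a)_{b,c} = N^b_{ac}`, one has
`tr((∑_a N_{a*} N_a)^{g-1}) = ∑_d λ_d^{g-1}` with `λ_d = ∑_a S_{ad}S_{a*d}/S_{0d}²`. -/
theorem genus_dimension_formula
    {I : Type*} [Fintype I] [DecidableEq I]
    (inv : I → I) (z : I) (hinv : ∀ i, inv (inv i) = i) (hz : inv z = z)
    (S : Matrix I I ℂ)
    (hSsym : ∀ a b, S a b = S b a)
    (hSstar : ∀ a b, S a b = S (inv a) (inv b))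
    (hS0 : ∀ d, S z d ≠ 0)
    (hunit : ∀ a c, ∑ b, S a b * S b (inv c) = if a = c then 1 else 0)
    (N : I → I → I → ℂ)
    (hN : ∀ a b c, N a b c = ∑ d, S a d * S b d * S (inv c) d / S z d)
    (Nmat : I → Matrix I I ℂ)
    (hNmat : ∀ a, Nmat a = Matrix.of fun b c => N a c b)
    (g : ℕ) (hg : 1 ≤ g) :
    Matrix.trace ((∑ a, Nmat (inv a) * Nmat a) ^ (g - 1))
      = ∑ d, (∑ a, S a d * S (inv a) d / (S z d) ^ 2) ^ (g - 1) := by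
  classical
  set k := g - 1 with hk
  -- the involution as an Equiv
  let e : Equiv.Perm I := ⟨inv, inv, hinv, hinv⟩
  -- right inverse of S
  set T : Matrix I I ℂ := Matrix.of (fun b c => S b (inv c)) with hT
  have hST : S * T = 1 := by
    ext a c
    simp only [Matrix.mul_apply, hT, Matrix.of_apply, Matrix.one_apply]
    exact hunit a c
  have hTS : T * S = 1 := mul_eq_one_comm.mp hST
  -- diagonal matrices
  set D : I → Matrix I I ℂ :=
    fun a => Matrix.diagonal (fun d => S a (inv d) / S z (inv d)) with hD
  have hkey : ∀ a, Nmat a = S * D a * T := by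
    intro a
    ext b c
    rw [hNmat, Matrix.of_apply, hN]
    rw [Matrix.mul_apply]
    rw [← Equiv.sum_comp e (fun j => (S * D a) b j * T j c)]
    apply Finset.sum_congr rfl
    intro d _
    have h1 : (S * D a) b (e d) = S b (inv d) * (S a d / S z d) := by
      simp only [hD, Matrix.mul_diagonal]
      have : e d = inv d := rfl
      rw [this, hinv]
    rw [h1]
    have h2 : T (e d) c = S (inv d) (inv c) := rfl
    rw [h2]
    have h3 : S b (inv d) = S (inv b) d := by rw [hSstar b (inv d), hinv]
    have h4 : S (inv d) (inv c) = S c d := by rw [← hSstar, hSsym]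
    rw [h3, h4]
    ring
  -- the middle diagonal matrix
  set lam : I → ℂ := fun d => ∑ a, S a d * S (inv a) d / (S z d) ^ 2 with hlam
  have hsum : (∑ a, Nmat (inv a) * Nmat a)
      = S * Matrix.diagonal (fun d => lam (inv d)) * T := by
    have : ∀ a, Nmat (inv a) * Nmat a = S * (D (inv a) * D a) * T := by
      intro a
      rw [hkey, hkey]
      calc S * D (inv a) * T * (S * D a * T)
          = S * D (inv a) * (T * S) * (D a * T) := by
            simp only [Matrix.mul_assoc]
        _ = S * (D (inv a) * D a) * T := by
            rw [hTS, Matrix.mul_one]; simp only [Matrix.mul_assoc]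
    rw [Finset.sum_congr rfl (fun a _ => this a), ← Finset.sum_mul,
      ← Finset.mul_sum]
    congr 2
    ext b c
    simp only [hD, Matrix.diagonal_mul_diagonal, Matrix.sum_apply,
      Matrix.diagonal_apply, hlam]
    by_cases hbc : b = c
    · subst hbc
      simp only [if_pos rfl]
      apply Finset.sum_congr rfl
      intro a _
      rw [if_pos trivial]
      ring
    · simp [hbc]
  rw [hsum]
  have hpow : (S * Matrix.diagonal (fun d => lam (inv d)) * T) ^ k
      = S * (Matrix.diagonal (fun d => lam (inv d))) ^ k * T := by
    induction k with
    | zero => simp [hST]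
    | succ n ih =>
      rw [pow_succ, pow_succ, ih]
      calc S * Matrix.diagonal (fun d => lam (inv d)) ^ n * T *
            (S * Matrix.diagonal (fun d => lam (inv d)) * T)
          = S * Matrix.diagonal (fun d => lam (inv d)) ^ n * (T * S) *
            (Matrix.diagonal (fun d => lam (inv d)) * T) := by
            simp only [Matrix.mul_assoc]
        _ = S * (Matrix.diagonal (fun d => lam (inv d)) ^ n *
            Matrix.diagonal (fun d => lam (inv d))) * T := by
            rw [hTS, Matrix.mul_one]; simp only [Matrix.mul_assoc]
  rw [hpow, Matrix.trace_mul_cycle, hTS, Matrix.one_mul,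
    Matrix.diagonal_pow, Matrix.trace_diagonal]
  simp only [Pi.pow_apply]
  exact Fintype.sum_equiv e _ _ (fun x => rfl)
end
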